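/- Let A be a p×q complex matrix and B a q×r complex matrix such that the kernel of A is contained in the image of B. If a(z) is a q-vector of polynomial functions with A·a(z) = 0 for all z, then there exists an r-vector b(z) of polynomial functions with B·b(z) = a(z) for all z, and moreover b(z) = 0 whenever a(z) = 0. -/

import Mathlib

open MvPolynomial

lemma exists_linear_section (p q r : ℕ) (A : Matrix (Fin p) (Fin q) ℂ)
    (B : Matrix (Fin q) (Fin r) ℂ)
    (hker : ∀ v : Fin q → ℂ, A.mulVec v = 0 → ∃ w : Fin r → ℂ, B.mulVec w = v) :
    ∃ M : Matrix (Fin r) (Fin q) ℂ,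
      ∀ v : Fin q → ℂ, A.mulVec v = 0 → B.mulVec (M.mulVec v) = v := by
  set f := B.mulVecLin with hf
  set K := LinearMap.ker A.mulVecLin with hKdef
  have hK : K ≤ LinearMap.range f := by
    intro v hv
    obtain ⟨w, hw⟩ := hker v (by simpa [hKdef, Matrix.mulVecLin_apply] using hv)
    exact ⟨w, by simpa [hf, Matrix.mulVecLin_apply] using hw⟩
  obtain ⟨K', hcompl⟩ := Submodule.exists_isCompl K
  set π := K.linearProjOfIsCompl K' hcompl
  obtain ⟨s, hs⟩ := LinearMap.exists_rightInverse_of_surjective f.rangeRestrict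
    (LinearMap.range_eq_top.2 f.surjective_rangeRestrict)
  set g : (Fin q → ℂ) →ₗ[ℂ] (Fin r → ℂ) := s.comp ((Submodule.inclusion hK).comp π)
  refine ⟨LinearMap.toMatrix' g, fun v hv => ?_⟩
  have hvK : v ∈ K := by
    simp only [hKdef, LinearMap.mem_ker, Matrix.mulVecLin_apply]
    exact hv
  have h1 : (LinearMap.toMatrix' g).mulVec v = g v := by
    rw [← Matrix.toLin'_apply, Matrix.toLin'_toMatrix']
  rw [h1]
  have hπ : π v = ⟨v, hvK⟩ := Submodule.linearProjOfIsCompl_apply_left hcompl ⟨v, hvK⟩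
  have h2 : f (g v) = v := by
    have hgv : g v = s (Submodule.inclusion hK ⟨v, hvK⟩) := by
      show s (Submodule.inclusion hK (π v)) = _
      rw [hπ]
    set x := Submodule.inclusion hK (⟨v, hvK⟩ : K) with hx
    have h3 : f.rangeRestrict (s x) = x := LinearMap.congr_fun hs x
    have h4 : f (s x) = (x : Fin q → ℂ) := congrArg Subtype.val h3
    rw [hgv, h4]
    rfl
  simpa [hf, Matrix.mulVecLin_apply] using h2

/-- **Parametrized solutions of linear systems, vanishing version.**
As in the basic parametrized-solution lemma, with the additional conclusion that the
polynomial solution `b(z)` can be chosen to vanish at every point `z` where `a(z)`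
vanishes. -/
theorem parametrized_solution_vanishing
    (p q r k : ℕ) (A : Matrix (Fin p) (Fin q) ℂ) (B : Matrix (Fin q) (Fin r) ℂ)
    (hker : ∀ v : Fin q → ℂ, A.mulVec v = 0 → ∃ w : Fin r → ℂ, B.mulVec w = v)
    (a : Fin q → MvPolynomial (Fin k) ℂ)
    (ha : ∀ z : Fin k → ℂ, A.mulVec (fun i => eval z (a i)) = 0) :
    ∃ b : Fin r → MvPolynomial (Fin k) ℂ,
      (∀ z : Fin k → ℂ, B.mulVec (fun j => eval z (b j)) = fun i => eval z (a i)) ∧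
      (∀ z : Fin k → ℂ, (∀ i, eval z (a i) = 0) → ∀ j, eval z (b j) = 0) := by
  obtain ⟨M, hM⟩ := exists_linear_section p q r A B hker
  refine ⟨fun j => ∑ i, C (M j i) * a i, fun z => ?_, fun z hz j => ?_⟩
  · have hev : (fun j => eval z (∑ i, C (M j i) * a i))
        = M.mulVec (fun i => eval z (a i)) := by
      funext j
      simp [Matrix.mulVec, dotProduct]
    rw [hev]
    exact hM _ (ha z)
  · simp [hz]
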